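/- For any crowdfunding game Γ(n,B,μ,p,τ) with 2 ≤ B ≤ n and a moderate price (p_l < τ < p_h), there exists a unique symmetric non-trivial Bayes–Nash equilibrium (λ,ψ); moreover this equilibrium satisfies ψ = 1 and λ ∈ [0,1). -/

import Mathlib

open Finset Filter

/-- Upper tail of a Binomial(m,γ): probability of at least `k` successes in `m` trials. -/
noncomputable def phi (γ : ℝ) (m k : ℕ) : ℝ :=
  ∑ j ∈ Finset.Icc k m, (m.choose j : ℝ) * γ ^ j * (1 - γ) ^ (m - j)

/-- Posterior probability of state H given a low signal. -/
noncomputable def pLow (μ p : ℝ) : ℝ := (1 - p) * μ / ((1 - p) * μ + p * (1 - μ))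

/-- Posterior probability of state H given a high signal. -/
noncomputable def pHigh (μ p : ℝ) : ℝ := p * μ / (p * μ + (1 - p) * (1 - μ))

/-- Probability that a player contributes in state H under symmetric strategy (lam, psi). -/
noncomputable def alphaH (p lam psi : ℝ) : ℝ := p * psi + (1 - p) * lam

/-- Probability that a player contributes in state L under symmetric strategy (lam, psi). -/
noncomputable def alphaL (p lam psi : ℝ) : ℝ := (1 - p) * psi + p * lam

/-- Expected utility of contributing for a low-signal player. -/
noncomputable def Ulow (n B : ℕ) (μ p τ lam psi : ℝ) : ℝ :=
  pLow μ p * (1 - τ) * phi (alphaH p lam psi) (n - 1) (B - 1)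
    - (1 - pLow μ p) * τ * phi (alphaL p lam psi) (n - 1) (B - 1)

/-- Expected utility of contributing for a high-signal player. -/
noncomputable def Uhigh (n B : ℕ) (μ p τ lam psi : ℝ) : ℝ :=
  pHigh μ p * (1 - τ) * phi (alphaH p lam psi) (n - 1) (B - 1)
    - (1 - pHigh μ p) * τ * phi (alphaL p lam psi) (n - 1) (B - 1)

/-- (lam, psi) is a symmetric Bayes–Nash equilibrium of Γ(n,B,μ,p,τ). -/
def IsSymmEq (n B : ℕ) (μ p τ lam psi : ℝ) : Prop :=
  lam ∈ Set.Icc (0:ℝ) 1 ∧ psi ∈ Set.Icc (0:ℝ) 1 ∧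
    (0 < lam → 0 ≤ Ulow n B μ p τ lam psi) ∧
    (lam < 1 → Ulow n B μ p τ lam psi ≤ 0) ∧
    (0 < psi → 0 ≤ Uhigh n B μ p τ lam psi) ∧
    (psi < 1 → Uhigh n B μ p τ lam psi ≤ 0)

/-- The strategy profile (lam, psi) is non-trivial: the good is supplied with
positive probability. -/
def NonTrivial (n B : ℕ) (μ p lam psi : ℝ) : Prop :=
  0 < μ * phi (alphaH p lam psi) n B + (1 - μ) * phi (alphaL p lam psi) n B

/-- The correctness index of Γ(n,B,μ,p,τ) at the symmetric strategy (lam, psi). -/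
noncomputable def thetaIdx (n B : ℕ) (μ p lam psi : ℝ) : ℝ :=
  μ * phi (alphaH p lam psi) n B + (1 - μ) * (1 - phi (alphaL p lam psi) n B)

/-- Expected fraction of contributors collected from a Binomial(n,γ) number of
contributors, counted only when the threshold B is met. -/
noncomputable def tailExp (γ : ℝ) (n B : ℕ) : ℝ :=
  ∑ j ∈ Finset.Icc B n, ((j : ℝ) / n) * (n.choose j : ℝ) * γ ^ j * (1 - γ) ^ (n - j)

/-- The participation index of Γ(n,B,μ,p,τ) at the symmetric strategy (lam, psi). -/
noncomputable def partIdx (n B : ℕ) (μ p lam psi : ℝ) : ℝ :=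
  μ * tailExp (alphaH p lam psi) n B + (1 - μ) * tailExp (alphaL p lam psi) n B

lemma phi_continuous (m k : ℕ) : Continuous fun γ : ℝ => phi γ m k := by
  unfold phi
  exact continuous_finset_sum _ fun j _ =>
    ((continuous_const.mul (continuous_pow j)).mul
      ((continuous_const.sub continuous_id).pow (m - j)))

lemma phi_nonneg {γ : ℝ} (h0 : 0 ≤ γ) (h1 : γ ≤ 1) (m k : ℕ) : 0 ≤ phi γ m k := by
  unfold phi
  refine Finset.sum_nonneg fun j _ => ?_
  have h2 : (0:ℝ) ≤ 1 - γ := by linarith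
  positivity

lemma phi_pos {γ : ℝ} (h0 : 0 < γ) (h1 : γ ≤ 1) {m k : ℕ} (hkm : k ≤ m) : 0 < phi γ m k := by
  unfold phi
  have hm : m ∈ Finset.Icc k m := by simp [hkm]
  have : (0:ℝ) < (m.choose m : ℝ) * γ ^ m * (1 - γ) ^ (m - m) := by
    simp only [Nat.choose_self, Nat.cast_one, one_mul, Nat.sub_self, pow_zero, mul_one]
    positivity
  refine lt_of_lt_of_le this ?_
  refine Finset.single_le_sum (f := fun j => (m.choose j : ℝ) * γ ^ j * (1 - γ) ^ (m - j)) (fun j _ => ?_) hm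
  have : (0:ℝ) ≤ 1 - γ := by linarith
  positivity

lemma phi_zero {m k : ℕ} (hk : 1 ≤ k) : phi 0 m k = 0 := by
  unfold phi
  refine Finset.sum_eq_zero fun j hj => ?_
  simp at hj
  have : j ≠ 0 := by omega
  simp [zero_pow this]

lemma phi_one {m k : ℕ} (hkm : k ≤ m) : phi 1 m k = 1 := by
  unfold phi
  rw [Finset.sum_eq_single m]
  · simp
  · intro j hj hne
    simp at hj
    have : m - j ≠ 0 := by omega
    simp [this]
  · intro h; simp [hkm] at h


lemma sum_Icc_telescope (a : ℕ → ℝ) {k m : ℕ} (h : k ≤ m) :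
    ∑ j ∈ Finset.Icc k m, (a j - a (j+1)) = a k - a (m+1) := by
  induction m, h using Nat.le_induction with
  | base => simp
  | succ m hm ih =>
      rw [Finset.sum_Icc_succ_top (by omega), ih]
      ring

lemma term_hasDerivAt (m j : ℕ) (γ : ℝ) :
    HasDerivAt (fun x : ℝ => (m.choose j : ℝ) * x ^ j * (1 - x) ^ (m - j))
      (((j : ℝ) * m.choose j * γ ^ (j-1) * (1-γ) ^ (m-j))
        - (((j:ℝ)+1) * m.choose (j+1) * γ ^ j * (1-γ) ^ (m-(j+1)))) γ := by
  have h1 : HasDerivAt (fun x : ℝ => (m.choose j : ℝ) * x ^ j)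
      ((m.choose j : ℝ) * ((j:ℝ) * γ ^ (j-1))) γ := (hasDerivAt_pow j γ).const_mul _
  have h2 : HasDerivAt (fun x : ℝ => (1 - x) ^ (m - j))
      (((m-j : ℕ):ℝ) * (1-γ) ^ (m-j-1) * (-1)) γ := by
    have hin : HasDerivAt (fun x : ℝ => 1 - x) (-1) γ := by
      simpa using (hasDerivAt_const γ (1:ℝ)).fun_sub (hasDerivAt_id γ)
    exact (hasDerivAt_pow (m-j) (1-γ)).comp γ hin
  have := h1.fun_mul h2
  have hn : (j+1) * m.choose (j+1) = (m - j) * m.choose j := by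
    rw [mul_comm, Nat.choose_succ_right_eq, mul_comm]
  have hch : ((j:ℝ)+1) * m.choose (j+1) = ((m-j:ℕ):ℝ) * m.choose j := by
    exact_mod_cast congrArg (Nat.cast (R := ℝ)) hn
  refine this.congr_deriv ?_
  rw [hch, show m - (j+1) = m - j - 1 by omega]
  ring

noncomputable def phi' (γ : ℝ) (m k : ℕ) : ℝ :=
  (k : ℝ) * m.choose k * γ ^ (k-1) * (1-γ) ^ (m-k)

lemma phi_hasDerivAt (m k : ℕ) (hkm : k ≤ m) (γ : ℝ) :
    HasDerivAt (fun x => phi x m k) (phi' γ m k) γ := by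
  have h : HasDerivAt (fun x => phi x m k)
      (∑ j ∈ Finset.Icc k m,
        (((j : ℝ) * m.choose j * γ ^ (j-1) * (1-γ) ^ (m-j))
          - (((j:ℝ)+1) * m.choose (j+1) * γ ^ j * (1-γ) ^ (m-(j+1))))) γ := by
    unfold phi
    exact HasDerivAt.fun_sum fun j _ => term_hasDerivAt m j γ
  have e : (∑ j ∈ Finset.Icc k m,
        (((j : ℝ) * m.choose j * γ ^ (j-1) * (1-γ) ^ (m-j))
          - (((j:ℝ)+1) * m.choose (j+1) * γ ^ j * (1-γ) ^ (m-(j+1))))) = phi' γ m k := by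
    have ht := sum_Icc_telescope (fun j => (j : ℝ) * m.choose j * γ ^ (j-1) * (1-γ) ^ (m-j)) hkm
    simp only [Nat.add_sub_cancel] at ht
    push_cast at ht ⊢
    rw [ht]
    simp [phi', Nat.choose_eq_zero_of_lt (show m < m+1 by omega)]
  rwa [e] at h

lemma phi_deriv (m k : ℕ) (hkm : k ≤ m) (γ : ℝ) :
    deriv (fun x => phi x m k) γ = phi' γ m k := (phi_hasDerivAt m k hkm γ).deriv

lemma phi'_nonneg {γ : ℝ} (h0 : 0 ≤ γ) (h1 : γ ≤ 1) (m k : ℕ) : 0 ≤ phi' γ m k := by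
  have : (0:ℝ) ≤ 1 - γ := by linarith
  unfold phi'; positivity

lemma phi_monotoneOn {m k : ℕ} (hkm : k ≤ m) :
    MonotoneOn (fun γ => phi γ m k) (Set.Icc (0:ℝ) 1) := by
  refine monotoneOn_of_deriv_nonneg (convex_Icc 0 1) (phi_continuous m k).continuousOn
    (fun x _ => ((phi_hasDerivAt m k hkm x).differentiableAt).differentiableWithinAt) ?_
  intro x hx
  rw [interior_Icc] at hx
  rw [phi_deriv m k hkm]
  exact phi'_nonneg hx.1.le hx.2.le m k

lemma phi'_pos {γ : ℝ} (h0 : 0 < γ) (h1 : γ < 1) {m k : ℕ} (hk : 1 ≤ k) (hkm : k ≤ m) :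
    0 < phi' γ m k := by
  have h2 : (0:ℝ) < 1 - γ := by linarith
  have hc : 0 < (m.choose k : ℝ) := by exact_mod_cast Nat.choose_pos hkm
  have hk' : (0:ℝ) < (k:ℝ) := by exact_mod_cast hk
  unfold phi'; positivity

lemma core {m k : ℕ} (hk : 1 ≤ k) (hkm : k ≤ m) {p t : ℝ} (hp : 1/2 < p) (hp1 : p < 1)
    (ht : 0 < t) (ht1 : t ≤ 1) :
    (1-p) * phi' (1-(1-p)*t) m k * phi (1-p*t) m k
      < p * phi' (1-p*t) m k * phi (1-(1-p)*t) m k := by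
  have ha : (0:ℝ) < 1 - p*t := by nlinarith
  have hA : (0:ℝ) < 1 - (1-p)*t := by nlinarith
  have hEa : phi (1-p*t) m k
      = ∑ j ∈ Finset.Icc k m, (m.choose j:ℝ) * (1-p*t)^j * (p*t)^(m-j) := by
    unfold phi
    refine Finset.sum_congr rfl fun j _ => ?_
    rw [show (1:ℝ) - (1-p*t) = p*t by ring]
  have hEA : phi (1-(1-p)*t) m k
      = ∑ j ∈ Finset.Icc k m, (m.choose j:ℝ) * (1-(1-p)*t)^j * ((1-p)*t)^(m-j) := by
    unfold phi
    refine Finset.sum_congr rfl fun j _ => ?_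
    rw [show (1:ℝ) - (1-(1-p)*t) = (1-p)*t by ring]
  have hDa : phi' (1-p*t) m k = (k:ℝ) * m.choose k * (1-p*t)^(k-1) * (p*t)^(m-k) := by
    unfold phi'
    rw [show (1:ℝ) - (1-p*t) = p*t by ring]
  have hDA : phi' (1-(1-p)*t) m k
      = (k:ℝ) * m.choose k * (1-(1-p)*t)^(k-1) * ((1-p)*t)^(m-k) := by
    unfold phi'
    rw [show (1:ℝ) - (1-(1-p)*t) = (1-p)*t by ring]
  rw [hEa, hEA, hDa, hDA, Finset.mul_sum, Finset.mul_sum]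
  refine Finset.sum_lt_sum_of_nonempty (Finset.nonempty_Icc.mpr hkm) fun j hj => ?_
  rw [Finset.mem_Icc] at hj
  obtain ⟨u, rfl⟩ : ∃ u, k = u + 1 := ⟨k-1, by omega⟩
  obtain ⟨v, rfl⟩ : ∃ v, j = (u+1) + v := ⟨j-(u+1), by omega⟩
  obtain ⟨w, rfl⟩ : ∃ w, m = ((u+1)+v) + w := ⟨m-((u+1)+v), by omega⟩
  simp only [show u+1-1 = u from rfl,
    show (u+1)+v+w - (u+1) = v+w by omega,
    show (u+1)+v+w - ((u+1)+v) = w by omega]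
  set a : ℝ := 1 - p*t with hadef
  set A : ℝ := 1 - (1-p)*t with hAdef
  have haA : a < A := by simp only [hadef, hAdef]; nlinarith
  have hbase : (1-p)*a < p*A := by nlinarith
  have hC1 : (0:ℝ) < ((u+1 : ℕ):ℝ) := by positivity
  have hC2 : (0:ℝ) < ((((u+1)+v+w).choose (u+1)) : ℝ) := by
    exact_mod_cast Nat.choose_pos (by omega)
  have hC3 : (0:ℝ) < ((((u+1)+v+w).choose ((u+1)+v)) : ℝ) := by
    exact_mod_cast Nat.choose_pos (by omega)
  have hp0 : (0:ℝ) < p := by linarith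
  have hq0 : (0:ℝ) < 1 - p := by linarith
  have key : ((1-p)*a)^(v+1) < (p*A)^(v+1) :=
    pow_lt_pow_left₀ hbase (by positivity) (by omega)
  calc (1-p) * ((((u+1):ℕ):ℝ) * ((((u+1)+v+w).choose (u+1)):ℝ) * A^u * ((1-p)*t)^(v+w))
        * (((((u+1)+v+w).choose ((u+1)+v)):ℝ) * a^((u+1)+v) * (p*t)^w)
      = ((((u+1):ℕ):ℝ) * ((((u+1)+v+w).choose (u+1)):ℝ) * ((((u+1)+v+w).choose ((u+1)+v)):ℝ)
          * t^(v+w) * t^w * p^w * (1-p)^w * a^u * A^u) * ((1-p)*a)^(v+1) := by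
        simp only [mul_pow]
        ring
    _ < ((((u+1):ℕ):ℝ) * ((((u+1)+v+w).choose (u+1)):ℝ) * ((((u+1)+v+w).choose ((u+1)+v)):ℝ)
          * t^(v+w) * t^w * p^w * (1-p)^w * a^u * A^u) * ((p*A))^(v+1) := by
        refine mul_lt_mul_of_pos_left key (by positivity)
    _ = p * ((((u+1):ℕ):ℝ) * ((((u+1)+v+w).choose (u+1)):ℝ) * a^u * (p*t)^(v+w))
        * (((((u+1)+v+w).choose ((u+1)+v)):ℝ) * A^((u+1)+v) * ((1-p)*t)^w) := by
        simp only [mul_pow]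
        ring

lemma alphaH_bounds {p lam : ℝ} (hp : 1/2 < p) (hp1 : p < 1) (h0 : 0 ≤ lam) (h1 : lam ≤ 1) :
    p ≤ alphaH p lam 1 ∧ alphaH p lam 1 ≤ 1 := by
  unfold alphaH; constructor <;> nlinarith

lemma alphaL_bounds {p lam : ℝ} (hp : 1/2 < p) (hp1 : p < 1) (h0 : 0 ≤ lam) (h1 : lam ≤ 1) :
    1 - p ≤ alphaL p lam 1 ∧ alphaL p lam 1 ≤ 1 := by
  unfold alphaL; constructor <;> nlinarith

lemma alphaLH {p lam : ℝ} (hp : 1/2 < p) (hp1 : p < 1) (h0 : 0 ≤ lam) (h1 : lam ≤ 1) :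
    alphaL p lam 1 ≤ alphaH p lam 1 := by
  unfold alphaL alphaH; nlinarith

lemma ratio_strictMonoOn {n B : ℕ} (hB1 : 2 ≤ B) (hB2 : B ≤ n) {p : ℝ}
    (hp : 1/2 < p) (hp1 : p < 1) :
    StrictMonoOn (fun lam => phi (alphaL p lam 1) (n-1) (B-1) / phi (alphaH p lam 1) (n-1) (B-1))
      (Set.Icc (0:ℝ) 1) := by
  have hk : 1 ≤ B - 1 := by omega
  have hkm : B - 1 ≤ n - 1 := by omega
  have hp0 : (0:ℝ) < p := by linarith
  have hHcont : Continuous fun lam : ℝ => phi (alphaH p lam 1) (n-1) (B-1) := by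
    unfold alphaH
    exact (phi_continuous (n-1) (B-1)).comp (by continuity)
  have hLcont : Continuous fun lam : ℝ => phi (alphaL p lam 1) (n-1) (B-1) := by
    unfold alphaL
    exact (phi_continuous (n-1) (B-1)).comp (by continuity)
  have hHpos : ∀ lam : ℝ, 0 ≤ lam → lam ≤ 1 → 0 < phi (alphaH p lam 1) (n-1) (B-1) := by
    intro lam h0 h1
    obtain ⟨hb1, hb2⟩ := alphaH_bounds hp hp1 h0 h1
    exact phi_pos (by linarith) hb2 hkm
  refine strictMonoOn_of_deriv_pos (convex_Icc 0 1) ?_ ?_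
  · exact ContinuousOn.div hLcont.continuousOn hHcont.continuousOn
      (fun x hx => (hHpos x hx.1 hx.2).ne')
  · intro x hx
    rw [interior_Icc] at hx
    obtain ⟨hx0, hx1⟩ := hx
    have hL : HasDerivAt (fun lam => phi (alphaL p lam 1) (n-1) (B-1))
        (phi' (alphaL p x 1) (n-1) (B-1) * p) x := by
      have hin : HasDerivAt (fun lam : ℝ => alphaL p lam 1) p x := by
        unfold alphaL
        simpa using ((hasDerivAt_id x).const_mul p).const_add ((1-p)*1)
      exact (phi_hasDerivAt (n-1) (B-1) hkm (alphaL p x 1)).comp x hin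
    have hH : HasDerivAt (fun lam => phi (alphaH p lam 1) (n-1) (B-1))
        (phi' (alphaH p x 1) (n-1) (B-1) * (1-p)) x := by
      have hin : HasDerivAt (fun lam : ℝ => alphaH p lam 1) (1-p) x := by
        unfold alphaH
        simpa using ((hasDerivAt_id x).const_mul (1-p)).const_add (p*1)
      exact (phi_hasDerivAt (n-1) (B-1) hkm (alphaH p x 1)).comp x hin
    have hHne : phi (alphaH p x 1) (n-1) (B-1) ≠ 0 := (hHpos x hx0.le hx1.le).ne'
    have hq := hL.fun_div hH hHne
    rw [hq.deriv]
    apply div_pos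
    · have e1 : alphaL p x 1 = 1 - p * (1-x) := by unfold alphaL; ring
      have e2 : alphaH p x 1 = 1 - (1-p) * (1-x) := by unfold alphaH; ring
      have hcore := core hk hkm hp hp1 (t := 1-x) (by linarith) (by linarith)
      rw [← e1, ← e2] at hcore
      nlinarith [hcore]
    · positivity

lemma Uhigh_nonneg (n B : ℕ) (μ p τ : ℝ) (hB1 : 2 ≤ B) (hB2 : B ≤ n)
    (hp : 1/2 < p) (hp1 : p < 1) (hτ0 : 0 < τ) (hτ1 : τ < 1)
    (hph : τ < pHigh μ p) (hph1 : pHigh μ p < 1)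
    {lam : ℝ} (h0 : 0 ≤ lam) (h1 : lam ≤ 1) : 0 ≤ Uhigh n B μ p τ lam 1 := by
  have hkm : B - 1 ≤ n - 1 := by omega
  obtain ⟨hL1, hL2⟩ := alphaL_bounds hp hp1 h0 h1
  obtain ⟨hH1, hH2⟩ := alphaH_bounds hp hp1 h0 h1
  have hLH := alphaLH hp hp1 h0 h1
  have hφL0 : 0 ≤ phi (alphaL p lam 1) (n-1) (B-1) := phi_nonneg (by linarith) hL2 _ _
  have hmono : phi (alphaL p lam 1) (n-1) (B-1) ≤ phi (alphaH p lam 1) (n-1) (B-1) :=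
    phi_monotoneOn hkm ⟨by linarith, hL2⟩ ⟨by linarith, hH2⟩ hLH
  have hph0 : 0 < pHigh μ p := lt_trans hτ0 hph
  have hc : (1 - pHigh μ p) * τ ≤ pHigh μ p * (1 - τ) := by nlinarith
  unfold Uhigh
  have k1 : (1 - pHigh μ p) * τ * phi (alphaL p lam 1) (n-1) (B-1)
      ≤ pHigh μ p * (1-τ) * phi (alphaL p lam 1) (n-1) (B-1) :=
    mul_le_mul_of_nonneg_right hc hφL0
  have k2 : pHigh μ p * (1-τ) * phi (alphaL p lam 1) (n-1) (B-1)
      ≤ pHigh μ p * (1-τ) * phi (alphaH p lam 1) (n-1) (B-1) :=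
    mul_le_mul_of_nonneg_left hmono (mul_nonneg hph0.le (by linarith))
  linarith

set_option maxHeartbeats 1600000 in
/-- with a moderate price there is a unique symmetric non-trivial
Bayes–Nash equilibrium, in which high-signal players surely contribute and
low-signal players contribute with probability in [0,1). -/
theorem stmt8 (n B : ℕ) (μ p τ : ℝ) (hB1 : 2 ≤ B) (hB2 : B ≤ n)
    (hμ : μ ∈ Set.Ioo (0:ℝ) 1) (hp : p ∈ Set.Ioo (1/2 : ℝ) 1) (hτ : τ ∈ Set.Ioo (0:ℝ) 1)
    (hmod : pLow μ p < τ ∧ τ < pHigh μ p) :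
    ∃ lam psi : ℝ,
      (IsSymmEq n B μ p τ lam psi ∧ NonTrivial n B μ p lam psi) ∧
      psi = 1 ∧ 0 ≤ lam ∧ lam < 1 ∧
      (∀ lam' psi', IsSymmEq n B μ p τ lam' psi' → NonTrivial n B μ p lam' psi' →
        lam' = lam ∧ psi' = psi) := by
  obtain ⟨hμ0, hμ1⟩ := hμ
  obtain ⟨hp2, hp1⟩ := hp
  obtain ⟨hτ0, hτ1⟩ := hτ
  obtain ⟨hτl, hτh⟩ := hmod
  have hp0 : (0:ℝ) < p := by linarith
  have hq0 : (0:ℝ) < 1 - p := by linarith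
  have hk : 1 ≤ B - 1 := by omega
  have hkm : B - 1 ≤ n - 1 := by omega
  have hB1' : 1 ≤ B := by omega
  -- posterior facts
  have hpl0 : 0 < pLow μ p := by
    unfold pLow
    have h : 0 < (1-p)*μ + p*(1-μ) := by nlinarith
    have h2 : 0 < (1-p)*μ := by nlinarith
    positivity
  have hpl1 : pLow μ p < 1 := by linarith
  have hph0 : 0 < pHigh μ p := by linarith
  have hph1 : pHigh μ p < 1 := by
    unfold pHigh
    rw [div_lt_one (by nlinarith)]
    nlinarith
  -- Non-triviality for any (lam,1)
  have hNT : ∀ lam : ℝ, 0 ≤ lam → lam ≤ 1 → NonTrivial n B μ p lam 1 := by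
    intro lam h0 h1
    obtain ⟨hL1, hL2⟩ := alphaL_bounds hp2 hp1 h0 h1
    obtain ⟨hH1, hH2⟩ := alphaH_bounds hp2 hp1 h0 h1
    unfold NonTrivial
    have h1' : 0 < μ * phi (alphaH p lam 1) n B :=
      mul_pos hμ0 (phi_pos (by linarith) hH2 hB2)
    have h2' : 0 ≤ (1 - μ) * phi (alphaL p lam 1) n B :=
      mul_nonneg (by linarith) (phi_nonneg (by linarith) hL2 n B)
    linarith
  -- equilibrium builder
  have hmk : ∀ lam : ℝ, 0 ≤ lam → lam < 1 → Ulow n B μ p τ lam 1 ≤ 0 →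
      (0 < lam → 0 ≤ Ulow n B μ p τ lam 1) → IsSymmEq n B μ p τ lam 1 := by
    intro lam h0 h1 hle hge
    exact ⟨⟨h0, h1.le⟩, ⟨zero_le_one, le_refl 1⟩, hge, fun _ => hle,
      fun _ => Uhigh_nonneg n B μ p τ hB1 hB2 hp2 hp1 hτ0 hτ1 hτh hph1 h0 h1.le,
      fun h => absurd h (lt_irrefl 1)⟩
  -- value at lam = 1
  have hU11 : Ulow n B μ p τ 1 1 = pLow μ p - τ := by
    unfold Ulow
    rw [show alphaH p 1 1 = 1 by unfold alphaH; ring,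
      show alphaL p 1 1 = 1 by unfold alphaL; ring, phi_one hkm]
    ring
  -- existence of lam
  obtain ⟨lam, h0lam, hlam1, hle, hge⟩ : ∃ lam : ℝ, 0 ≤ lam ∧ lam < 1 ∧
      Ulow n B μ p τ lam 1 ≤ 0 ∧ (0 < lam → 0 ≤ Ulow n B μ p τ lam 1) := by
    by_cases hc : Ulow n B μ p τ 0 1 ≤ 0
    · exact ⟨0, le_refl 0, zero_lt_one, hc, fun h => absurd h (lt_irrefl 0)⟩
    · push_neg at hc
      have hcont : ContinuousOn (fun lam : ℝ => Ulow n B μ p τ lam 1) (Set.Icc 0 1) := by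
        unfold Ulow
        apply ContinuousOn.sub
        · apply ContinuousOn.mul continuousOn_const
          apply Continuous.continuousOn
          unfold alphaH
          exact (phi_continuous (n-1) (B-1)).comp (by continuity)
        · apply ContinuousOn.mul continuousOn_const
          apply Continuous.continuousOn
          unfold alphaL
          exact (phi_continuous (n-1) (B-1)).comp (by continuity)
      have hmem : (0:ℝ) ∈ Set.Ioo (Ulow n B μ p τ 1 1) (Ulow n B μ p τ 0 1) := by
        rw [hU11]; exact ⟨by linarith, hc⟩
      obtain ⟨lam, hlam, hval⟩ := intermediate_value_Ioo' zero_le_one hcont hmem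
      exact ⟨lam, hlam.1.le, hlam.2, le_of_eq hval, fun _ => le_of_eq hval.symm⟩
  have heq : IsSymmEq n B μ p τ lam 1 := hmk lam h0lam hlam1 hle hge
  -- uniqueness of psi
  have hpsi1 : ∀ l q : ℝ, IsSymmEq n B μ p τ l q → NonTrivial n B μ p l q → q = 1 := by
    intro l q hE hN
    obtain ⟨⟨hl0, hl1⟩, ⟨hq0', hq1⟩, e1, e2, e3, e4⟩ := hE
    by_contra hqn
    have hqlt : q < 1 := lt_of_le_of_ne hq1 hqn
    have hUh := e4 hqlt
    have hH0 : 0 ≤ alphaH p l q := by unfold alphaH; nlinarith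
    have hH2 : alphaH p l q ≤ 1 := by unfold alphaH; nlinarith
    have hL0 : 0 ≤ alphaL p l q := by unfold alphaL; nlinarith
    have hL2 : alphaL p l q ≤ 1 := by unfold alphaL; nlinarith
    rcases eq_or_lt_of_le hH0 with hH | hH
    · -- alphaH = 0 forces trivial profile, contradicting NonTrivial
      have hH' : p*q + (1-p)*l = 0 := by unfold alphaH at hH; linarith
      have hqz : q = 0 := by nlinarith
      have hlz : l = 0 := by nlinarith
      have hHe : alphaH p l q = 0 := hH.symm
      have hLe : alphaL p l q = 0 := by unfold alphaL; rw [hqz, hlz]; ring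
      unfold NonTrivial at hN
      rw [hHe, hLe, phi_zero hB1'] at hN
      linarith
    · -- alphaH > 0
      have hφH : 0 < phi (alphaH p l q) (n-1) (B-1) := phi_pos hH hH2 hkm
      have hφL0 : 0 ≤ phi (alphaL p l q) (n-1) (B-1) := phi_nonneg hL0 hL2 _ _
      have hdiff : Uhigh n B μ p τ l q - Ulow n B μ p τ l q
          = (pHigh μ p - pLow μ p) * ((1-τ) * phi (alphaH p l q) (n-1) (B-1)
              + τ * phi (alphaL p l q) (n-1) (B-1)) := by
        unfold Uhigh Ulow; ring
      have hbr : 0 < (1-τ) * phi (alphaH p l q) (n-1) (B-1)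
          + τ * phi (alphaL p l q) (n-1) (B-1) := by nlinarith
      have hUl : Ulow n B μ p τ l q < 0 := by nlinarith
      have hlz : l = 0 := le_antisymm (not_lt.mp fun h => absurd (e1 h) (not_le.mpr hUl)) hl0
      -- then alphaL ≤ alphaH, so Uhigh > 0, contradiction
      have hLH : alphaL p l q ≤ alphaH p l q := by
        unfold alphaL alphaH; rw [hlz]; nlinarith
      have hmono : phi (alphaL p l q) (n-1) (B-1) ≤ phi (alphaH p l q) (n-1) (B-1) :=
        phi_monotoneOn hkm ⟨hL0, hL2⟩ ⟨hH0, hH2⟩ hLH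
      have c1 : (1 - pHigh μ p) * τ < pHigh μ p * (1-τ) := by nlinarith
      have k1 : (1 - pHigh μ p) * τ * phi (alphaL p l q) (n-1) (B-1)
          ≤ (1 - pHigh μ p) * τ * phi (alphaH p l q) (n-1) (B-1) :=
        mul_le_mul_of_nonneg_left hmono (by nlinarith)
      have k2 : (1 - pHigh μ p) * τ * phi (alphaH p l q) (n-1) (B-1)
          < pHigh μ p * (1-τ) * phi (alphaH p l q) (n-1) (B-1) :=
        mul_lt_mul_of_pos_right c1 hφH
      unfold Uhigh at hUh
      linarith
  -- uniqueness of lam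
  have hlamuniq : ∀ l1 l2 : ℝ, IsSymmEq n B μ p τ l1 1 → IsSymmEq n B μ p τ l2 1 →
      l1 < 1 → l2 < 1 → l1 < l2 → False := by
    intro l1 l2 hE1 hE2 h1lt h2lt hlt
    obtain ⟨⟨h10, h11⟩, -, e11, e12, -, -⟩ := hE1
    obtain ⟨⟨h20, h21⟩, -, e21, e22, -, -⟩ := hE2
    have hU1 := e12 h1lt
    have hU2 : 0 ≤ Ulow n B μ p τ l2 1 := e21 (lt_of_le_of_lt h10 hlt)
    have hH1pos : 0 < phi (alphaH p l1 1) (n-1) (B-1) := by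
      obtain ⟨hb1, hb2⟩ := alphaH_bounds hp2 hp1 h10 h11
      exact phi_pos (by linarith) hb2 hkm
    have hH2pos : 0 < phi (alphaH p l2 1) (n-1) (B-1) := by
      obtain ⟨hb1, hb2⟩ := alphaH_bounds hp2 hp1 h20 h21
      exact phi_pos (by linarith) hb2 hkm
    have hr := ratio_strictMonoOn hB1 hB2 hp2 hp1 (Set.mem_Icc.mpr ⟨h10, h11⟩)
      (Set.mem_Icc.mpr ⟨h20, h21⟩) hlt
    simp only at hr
    rw [div_lt_div_iff₀ hH1pos hH2pos] at hr
    unfold Ulow at hU1 hU2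
    have c1 : 0 < pLow μ p * (1-τ) := by nlinarith
    have c2 : 0 < (1 - pLow μ p) * τ := by nlinarith
    have m1 := mul_le_mul_of_nonneg_right (sub_nonpos.mp hU1) hH2pos.le
    have m2 := mul_le_mul_of_nonneg_right (sub_nonneg.mp hU2) hH1pos.le
    have m3 := mul_lt_mul_of_pos_left hr c2
    nlinarith [m1, m2, m3]
  -- conclusion
  refine ⟨lam, 1, ⟨heq, hNT lam h0lam hlam1.le⟩, rfl, h0lam, hlam1, ?_⟩
  intro l' q' hE' hN'
  have hq' : q' = 1 := hpsi1 l' q' hE' hN'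
  subst hq'
  have hl'le : l' ≤ 1 := hE'.1.2
  have hl'0 : 0 ≤ l' := hE'.1.1
  have hl'lt : l' < 1 := by
    rcases eq_or_lt_of_le hl'le with h | h
    · exfalso
      have := hE'.2.2.1 (by rw [h]; exact zero_lt_one)
      rw [h, hU11] at this
      linarith
    · exact h
  refine ⟨?_, rfl⟩
  rcases lt_trichotomy l' lam with h | h | h
  · exact absurd (hlamuniq l' lam hE' heq hl'lt hlam1 h) not_false
  · exact h
  · exact absurd (hlamuniq lam l' heq hE' hlam1 hl'lt h) not_false
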